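/- Let α ∈ [0,1), α₂ > 0, Δt > 0, t_j = jΔt, and m ≥ 1. Then Δt · Σ_{j=1}^m t_{m-j+1}^{-α} t_j^{-1+α₂} ≤ C_{α,α₂} t_m^{-α+α₂}, with C_{α,α₂} depending only on α and α₂. -/

import Mathlib

open Real Finset

private lemma sum_rpow_le_neg {p : ℝ} (hp : -1 < p) (hp0 : p ≤ 0) (m : ℕ) :
    ∑ j ∈ Finset.Icc 1 m, (j : ℝ) ^ p ≤ (m : ℝ) ^ (p + 1) / (p + 1) := by
  have hq : 0 < p + 1 := by linarith
  induction m with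
  | zero => simp [Real.zero_rpow hq.ne']
  | succ m ih =>
    rw [Finset.sum_Icc_succ_top (Nat.one_le_iff_ne_zero.mpr (Nat.succ_ne_zero m))]
    have hx : (1 : ℝ) ≤ (m + 1 : ℕ) := by exact_mod_cast Nat.one_le_iff_ne_zero.mpr (Nat.succ_ne_zero m)
    set x : ℝ := ((m + 1 : ℕ) : ℝ) with hxdef
    have hx0 : 0 < x := lt_of_lt_of_le one_pos hx
    -- key : (x-1)^(p+1) ≤ x^(p+1) - (p+1) * x^p
    have hs : -1 ≤ -1 / x := by
      rw [neg_div, neg_le_neg_iff]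
      exact div_le_one_of_le₀ hx hx0.le
    have hbern := rpow_one_add_le_one_add_mul_self hs hq.le (by linarith : p + 1 ≤ 1)
    have h1x : (0:ℝ) ≤ 1 + -1/x := by linarith
    have key : (x - 1) ^ (p + 1) ≤ x ^ (p + 1) - (p + 1) * x ^ p := by
      have hmul := mul_le_mul_of_nonneg_right hbern (Real.rpow_nonneg hx0.le (p + 1))
      have hleft : (1 + -1 / x) ^ (p + 1) * x ^ (p + 1) = (x - 1) ^ (p + 1) := by
        rw [← Real.mul_rpow h1x hx0.le]
        congr 1
        field_simp
        ring
      have hxp : x ^ (p + 1) / x = x ^ p := by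
        rw [eq_comm, eq_div_iff hx0.ne', ← Real.rpow_add_one hx0.ne']
      rw [hleft] at hmul
      calc (x - 1) ^ (p + 1) ≤ (1 + (p + 1) * (-1 / x)) * x ^ (p + 1) := hmul
        _ = x ^ (p + 1) - (p + 1) * (x ^ (p + 1) / x) := by ring
        _ = x ^ (p + 1) - (p + 1) * x ^ p := by rw [hxp]
    have hm : ((m : ℕ) : ℝ) = x - 1 := by push_cast [hxdef]; ring
    have : ((m + 1 : ℕ) : ℝ) ^ p ≤ (x ^ (p + 1) - (x - 1) ^ (p + 1)) / (p + 1) := by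
      rw [le_div_iff₀ hq]
      nlinarith [key]
    calc ∑ j ∈ Finset.Icc 1 m, (j : ℝ) ^ p + ((m + 1 : ℕ) : ℝ) ^ p
        ≤ (x - 1) ^ (p + 1) / (p + 1) + (x ^ (p + 1) - (x - 1) ^ (p + 1)) / (p + 1) := by
          gcongr
          · rw [← hm]; exact ih
      _ = x ^ (p + 1) / (p + 1) := by ring

private lemma sum_rpow_le' {p : ℝ} (hp : -1 < p) (m : ℕ) (hm : 1 ≤ m) :
    ∑ j ∈ Finset.Icc 1 m, (j : ℝ) ^ p ≤ max 1 (1 / (p + 1)) * (m : ℝ) ^ (p + 1) := by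
  have hq : 0 < p + 1 := by linarith
  have hm0 : (0:ℝ) < m := by exact_mod_cast hm
  rcases le_or_gt p 0 with hp0 | hp0
  · calc ∑ j ∈ Finset.Icc 1 m, (j : ℝ) ^ p ≤ (m : ℝ) ^ (p + 1) / (p + 1) :=
        sum_rpow_le_neg hp hp0 m
      _ = (1 / (p + 1)) * (m : ℝ) ^ (p + 1) := by ring
      _ ≤ max 1 (1 / (p + 1)) * (m : ℝ) ^ (p + 1) :=
          mul_le_mul_of_nonneg_right (le_max_right _ _) (Real.rpow_nonneg hm0.le _)
  · have : ∑ j ∈ Finset.Icc 1 m, (j : ℝ) ^ p ≤ ∑ _j ∈ Finset.Icc 1 m, (m : ℝ) ^ p := by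
      apply Finset.sum_le_sum
      intro j hj
      have hj2 := (Finset.mem_Icc.mp hj).2
      exact Real.rpow_le_rpow (Nat.cast_nonneg j) (by exact_mod_cast hj2) hp0.le
    rw [Finset.sum_const, Nat.card_Icc] at this
    calc ∑ j ∈ Finset.Icc 1 m, (j : ℝ) ^ p ≤ (m + 1 - 1 : ℕ) • (m : ℝ) ^ p := this
      _ = (m : ℝ) * (m : ℝ) ^ p := by simp
      _ = (m : ℝ) ^ (p + 1) := by
          rw [add_comm p 1, Real.rpow_one_add' hm0.le (by positivity : (1:ℝ) + p ≠ 0)]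
      _ ≤ max 1 (1 / (p + 1)) * (m : ℝ) ^ (p + 1) := by
          nth_rewrite 1 [← one_mul ((m:ℝ) ^ (p+1))]
          exact mul_le_mul_of_nonneg_right (le_max_left _ _) (Real.rpow_nonneg hm0.le _)

private lemma sum_reflect (m : ℕ) (g : ℕ → ℝ) :
    ∑ j ∈ Finset.Icc 1 m, g (m - j + 1) = ∑ k ∈ Finset.Icc 1 m, g k := by
  apply Finset.sum_nbij' (fun j => m - j + 1) (fun k => m - k + 1)
  all_goals intro a ha <;> simp only [Finset.mem_Icc] at * <;> omega

theorem stmt_5 (α α₂ : ℝ) (hα0 : 0 ≤ α) (hα1 : α < 1) (h2 : 0 < α₂) :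
    ∃ C : ℝ, 0 < C ∧ ∀ (Δt : ℝ) (m : ℕ), 0 < Δt → 1 ≤ m →
      Δt * ∑ j ∈ Finset.Icc 1 m,
        (((m - j + 1 : ℕ) : ℝ) * Δt) ^ (-α) * (((j : ℕ) : ℝ) * Δt) ^ (-1 + α₂)
      ≤ C * ((m : ℝ) * Δt) ^ (-α + α₂) := by
  set C₁ : ℝ := max 1 (1 / α₂) with hC₁
  set C₂ : ℝ := max 1 (1 / (1 - α)) with hC₂
  set K : ℝ := max 1 ((2:ℝ) ^ (1 - α₂)) with hK
  refine ⟨(2:ℝ) ^ α * C₁ + K * C₂, by positivity, ?_⟩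
  intro Δt m hΔ hm
  have hM0 : (0:ℝ) < (m:ℝ) := by exact_mod_cast hm
  have hM1 : (1:ℝ) ≤ (m:ℝ) := by exact_mod_cast hm
  -- factor out Δt powers
  have hterm : ∀ j : ℕ, (((m - j + 1 : ℕ) : ℝ) * Δt) ^ (-α) * (((j : ℕ) : ℝ) * Δt) ^ (-1 + α₂)
      = ((m - j + 1 : ℕ) : ℝ) ^ (-α) * ((j : ℕ) : ℝ) ^ (-1 + α₂) * (Δt ^ (-α) * Δt ^ (-1 + α₂)) := by
    intro j
    rw [Real.mul_rpow (Nat.cast_nonneg _) hΔ.le, Real.mul_rpow (Nat.cast_nonneg _) hΔ.le]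
    ring
  rw [Finset.sum_congr rfl (fun j _ => hterm j), ← Finset.sum_mul]
  set S : ℝ := ∑ j ∈ Finset.Icc 1 m,
      ((m - j + 1 : ℕ) : ℝ) ^ (-α) * ((j : ℕ) : ℝ) ^ (-1 + α₂) with hS
  -- main discrete bound : S ≤ (2^α*C₁ + K*C₂) * m^(-α+α₂)
  have hKpos : (0:ℝ) < K := lt_of_lt_of_le one_pos (le_max_left _ _)
  have hMhalf : (0:ℝ) < (m:ℝ) / 2 := by positivity
  have main : S ≤ ((2:ℝ) ^ α * C₁ + K * C₂) * (m:ℝ) ^ (-α + α₂) := by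
    have hsplit := Finset.sum_filter_add_sum_filter_not (Finset.Icc 1 m)
      (fun j => 2 * j ≤ m + 1)
      (fun j => ((m - j + 1 : ℕ) : ℝ) ^ (-α) * ((j : ℕ) : ℝ) ^ (-1 + α₂))
    rw [hS, ← hsplit]
    -- Part 1
    have part1 : ∑ j ∈ (Finset.Icc 1 m).filter (fun j => 2 * j ≤ m + 1),
        ((m - j + 1 : ℕ) : ℝ) ^ (-α) * ((j : ℕ) : ℝ) ^ (-1 + α₂)
        ≤ (2:ℝ) ^ α * C₁ * (m:ℝ) ^ (-α + α₂) := by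
      have step : ∀ j ∈ (Finset.Icc 1 m).filter (fun j => 2 * j ≤ m + 1),
          ((m - j + 1 : ℕ) : ℝ) ^ (-α) * ((j : ℕ) : ℝ) ^ (-1 + α₂)
          ≤ ((m:ℝ)/2) ^ (-α) * ((j : ℕ) : ℝ) ^ (-1 + α₂) := by
        intro j hj
        simp only [Finset.mem_filter, Finset.mem_Icc] at hj
        have hge : (m:ℝ)/2 ≤ ((m - j + 1 : ℕ) : ℝ) := by
          rw [div_le_iff₀ (by norm_num : (0:ℝ) < 2)]
          have : m ≤ (m - j + 1) * 2 := by omega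
          exact_mod_cast this
        exact mul_le_mul_of_nonneg_right
          (Real.rpow_le_rpow_of_nonpos hMhalf hge (neg_nonpos.mpr hα0))
          (Real.rpow_nonneg (Nat.cast_nonneg _) _)
      calc ∑ j ∈ (Finset.Icc 1 m).filter (fun j => 2 * j ≤ m + 1),
            ((m - j + 1 : ℕ) : ℝ) ^ (-α) * ((j : ℕ) : ℝ) ^ (-1 + α₂)
          ≤ ∑ j ∈ (Finset.Icc 1 m).filter (fun j => 2 * j ≤ m + 1),
            ((m:ℝ)/2) ^ (-α) * ((j : ℕ) : ℝ) ^ (-1 + α₂) := Finset.sum_le_sum step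
        _ = ((m:ℝ)/2) ^ (-α) * ∑ j ∈ (Finset.Icc 1 m).filter (fun j => 2 * j ≤ m + 1),
            ((j : ℕ) : ℝ) ^ (-1 + α₂) := by rw [Finset.mul_sum]
        _ ≤ ((m:ℝ)/2) ^ (-α) * ∑ j ∈ Finset.Icc 1 m, ((j : ℕ) : ℝ) ^ (-1 + α₂) :=
            mul_le_mul_of_nonneg_left
              (Finset.sum_le_sum_of_subset_of_nonneg (Finset.filter_subset _ _)
                (fun j _ _ => Real.rpow_nonneg (Nat.cast_nonneg _) _))
              (Real.rpow_nonneg hMhalf.le _)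
        _ ≤ ((m:ℝ)/2) ^ (-α) * (max 1 (1 / (-1 + α₂ + 1)) * (m:ℝ) ^ (-1 + α₂ + 1)) :=
            mul_le_mul_of_nonneg_left (sum_rpow_le' (by linarith) m hm)
              (Real.rpow_nonneg hMhalf.le _)
        _ = (2:ℝ) ^ α * C₁ * (m:ℝ) ^ (-α + α₂) := by
            have h1 : -1 + α₂ + 1 = α₂ := by ring
            have hma : ((m:ℝ)) ^ (-α + α₂) = (m:ℝ) ^ (-α) * (m:ℝ) ^ α₂ := by
              rw [← Real.rpow_add hM0]
            rw [h1, ← hC₁, hma,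
              Real.div_rpow hM0.le (by norm_num : (0:ℝ) ≤ 2),
              Real.rpow_neg (by norm_num : (0:ℝ) ≤ 2), div_eq_mul_inv, inv_inv]
            ring
    -- Part 2
    have part2 : ∑ j ∈ (Finset.Icc 1 m).filter (fun j => ¬ 2 * j ≤ m + 1),
        ((m - j + 1 : ℕ) : ℝ) ^ (-α) * ((j : ℕ) : ℝ) ^ (-1 + α₂)
        ≤ K * C₂ * (m:ℝ) ^ (-α + α₂) := by
      have step : ∀ j ∈ (Finset.Icc 1 m).filter (fun j => ¬ 2 * j ≤ m + 1),
          ((m - j + 1 : ℕ) : ℝ) ^ (-α) * ((j : ℕ) : ℝ) ^ (-1 + α₂)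
          ≤ ((m - j + 1 : ℕ) : ℝ) ^ (-α) * (K * (m:ℝ) ^ (-1 + α₂)) := by
        intro j hj
        simp only [Finset.mem_filter, Finset.mem_Icc, not_le] at hj
        have hjge : (m:ℝ)/2 ≤ (j:ℕ) := by
          rw [div_le_iff₀ (by norm_num : (0:ℝ) < 2)]
          have : m ≤ j * 2 := by omega
          exact_mod_cast this
        have hjle : ((j:ℕ):ℝ) ≤ (m:ℝ) := by exact_mod_cast hj.1.2
        have hbound : ((j : ℕ) : ℝ) ^ (-1 + α₂) ≤ K * (m:ℝ) ^ (-1 + α₂) := by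
          rcases le_or_gt α₂ 1 with hc | hc
          · calc ((j : ℕ) : ℝ) ^ (-1 + α₂) ≤ ((m:ℝ)/2) ^ (-1 + α₂) :=
                Real.rpow_le_rpow_of_nonpos hMhalf hjge (by linarith)
              _ = (2:ℝ) ^ (1 - α₂) * (m:ℝ) ^ (-1 + α₂) := by
                rw [Real.div_rpow hM0.le (by norm_num : (0:ℝ) ≤ 2)]
                rw [div_eq_mul_inv, ← Real.rpow_neg (by norm_num : (0:ℝ) ≤ 2)]
                have : -(-1 + α₂) = 1 - α₂ := by ring
                rw [this]; ring
              _ ≤ K * (m:ℝ) ^ (-1 + α₂) :=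
                mul_le_mul_of_nonneg_right (le_max_right _ _) (Real.rpow_nonneg hM0.le _)
          · calc ((j : ℕ) : ℝ) ^ (-1 + α₂) ≤ (m:ℝ) ^ (-1 + α₂) :=
                Real.rpow_le_rpow (Nat.cast_nonneg _) hjle (by linarith)
              _ ≤ K * (m:ℝ) ^ (-1 + α₂) := by
                nth_rewrite 1 [← one_mul ((m:ℝ) ^ (-1 + α₂))]
                exact mul_le_mul_of_nonneg_right (le_max_left _ _) (Real.rpow_nonneg hM0.le _)
        exact mul_le_mul_of_nonneg_left hbound (Real.rpow_nonneg (Nat.cast_nonneg _) _)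
      calc ∑ j ∈ (Finset.Icc 1 m).filter (fun j => ¬ 2 * j ≤ m + 1),
            ((m - j + 1 : ℕ) : ℝ) ^ (-α) * ((j : ℕ) : ℝ) ^ (-1 + α₂)
          ≤ ∑ j ∈ (Finset.Icc 1 m).filter (fun j => ¬ 2 * j ≤ m + 1),
            ((m - j + 1 : ℕ) : ℝ) ^ (-α) * (K * (m:ℝ) ^ (-1 + α₂)) := Finset.sum_le_sum step
        _ ≤ ∑ j ∈ Finset.Icc 1 m,
            ((m - j + 1 : ℕ) : ℝ) ^ (-α) * (K * (m:ℝ) ^ (-1 + α₂)) :=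
            Finset.sum_le_sum_of_subset_of_nonneg (Finset.filter_subset _ _)
              (fun j _ _ => by positivity)
        _ = (∑ j ∈ Finset.Icc 1 m, ((m - j + 1 : ℕ) : ℝ) ^ (-α)) * (K * (m:ℝ) ^ (-1 + α₂)) := by
            rw [Finset.sum_mul]
        _ = (∑ k ∈ Finset.Icc 1 m, ((k : ℕ) : ℝ) ^ (-α)) * (K * (m:ℝ) ^ (-1 + α₂)) := by
            rw [sum_reflect m (fun n => ((n:ℕ):ℝ) ^ (-α))]
        _ ≤ (max 1 (1 / (-α + 1)) * (m:ℝ) ^ (-α + 1)) * (K * (m:ℝ) ^ (-1 + α₂)) :=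
            mul_le_mul_of_nonneg_right (sum_rpow_le' (by linarith) m hm) (by positivity)
        _ = K * C₂ * (m:ℝ) ^ (-α + α₂) := by
            have h1 : max 1 (1 / (-α + 1)) = C₂ := by
              rw [hC₂]; congr 2; ring
            have hma : ((m:ℝ)) ^ (-α + α₂) = (m:ℝ) ^ (-α + 1) * (m:ℝ) ^ (-1 + α₂) := by
              rw [← Real.rpow_add hM0]; congr 1; ring
            rw [h1, hma]; ring
    calc _ ≤ (2:ℝ) ^ α * C₁ * (m:ℝ) ^ (-α + α₂) + K * C₂ * (m:ℝ) ^ (-α + α₂) :=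
          add_le_add part1 part2
      _ = ((2:ℝ) ^ α * C₁ + K * C₂) * (m:ℝ) ^ (-α + α₂) := by ring
  -- combine with Δt powers
  have hX : Δt * (Δt ^ (-α) * Δt ^ (-1 + α₂)) = Δt ^ (-α + α₂) := by
    nth_rewrite 1 [← Real.rpow_one Δt]
    rw [← Real.rpow_add hΔ, ← Real.rpow_add hΔ]
    congr 1
    ring
  rw [Real.mul_rpow hM0.le hΔ.le]
  calc Δt * (S * (Δt ^ (-α) * Δt ^ (-1 + α₂)))
      = S * (Δt * (Δt ^ (-α) * Δt ^ (-1 + α₂))) := by ring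
    _ = S * Δt ^ (-α + α₂) := by rw [hX]
    _ ≤ ((2:ℝ) ^ α * C₁ + K * C₂) * (m:ℝ) ^ (-α + α₂) * Δt ^ (-α + α₂) :=
        mul_le_mul_of_nonneg_right main (Real.rpow_nonneg hΔ.le _)
    _ = ((2:ℝ) ^ α * C₁ + K * C₂) * ((m:ℝ) ^ (-α + α₂) * Δt ^ (-α + α₂)) := by ring
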